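/- For coprime integers q > p > 1, there are infinitely many n with f_{p,q}(n+1) > f_{p,q}(n). -/

import Mathlib

open Filter Real

/-- Number of representations of `n` as a sum of distinct terms of the form `p^a * q^b`. -/
noncomputable def fpq (p q n : ℕ) : ℕ :=
  Set.ncard {S : Finset ℕ | (∀ k ∈ S, ∃ a b : ℕ, k = p ^ a * q ^ b) ∧ S.sum id = n}

lemma reps_finite (p q n : ℕ) :
    {S : Finset ℕ | (∀ k ∈ S, ∃ a b : ℕ, k = p ^ a * q ^ b) ∧ S.sum id = n}.Finite := by
  apply Set.Finite.subset (Finset.finite_toSet ((Finset.range (n+1)).powerset))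
  intro S hS
  obtain ⟨-, hsum⟩ := hS
  have hsub : S ⊆ Finset.range (n+1) := by
    intro x hx
    have hx' : x ≤ S.sum id := Finset.single_le_sum (f := id) (fun i _ => Nat.zero_le _) hx
    rw [Finset.mem_range]; omega
  exact Finset.mem_coe.2 (Finset.mem_powerset.2 hsub)

lemma filter_card_le (p q n : ℕ) (A : Finset ℕ)
    (hA : ∀ x ∈ A, ∃ a b : ℕ, x = p ^ a * q ^ b) :
    ((A.powerset.filter (fun S => S.sum id = n)).card) ≤ fpq p q n := by
  rw [fpq, ← Set.ncard_coe_finset]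
  apply Set.ncard_le_ncard _ (reps_finite p q n)
  intro S hS
  simp only [Finset.coe_filter, Set.mem_setOf_eq, Finset.mem_powerset] at hS
  exact ⟨fun k hk => hA k (hS.1 hk), hS.2⟩

lemma pq_inj {p q : ℕ} (hp : 1 < p) (hq : 1 < q) (hpq : Nat.Coprime p q) :
    Function.Injective (fun ab : ℕ × ℕ => p ^ ab.1 * q ^ ab.2) := by
  rintro ⟨a, b⟩ ⟨c, d⟩ h
  simp only at h
  have key : ∀ a b c d : ℕ, p ^ a * q ^ b = p ^ c * q ^ d → a ≤ c := by
    intro a b c d h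
    have h1 : p ^ a ∣ p ^ c * q ^ d := h ▸ dvd_mul_right _ _
    have c1 : Nat.Coprime (p ^ a) (q ^ d) := Nat.Coprime.pow a d hpq
    have h2 : p ^ a ∣ p ^ c := (Nat.Coprime.dvd_of_dvd_mul_right c1 h1)
    exact (Nat.pow_dvd_pow_iff_le_right hp).1 h2
  have hac : a = c := le_antisymm (key a b c d h) (key c d a b h.symm)
  subst hac
  have hq0 : p ^ a ≠ 0 := by positivity
  have hbd : q ^ b = q ^ d := by
    exact Nat.eq_of_mul_eq_mul_left (by positivity) h
  have : b = d := Nat.pow_right_injective hq hbd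
  simp [this]

theorem stmt4 (p q : ℕ) (hp : 1 < p) (hpq' : p < q) (hpq : Nat.Coprime p q) :
    ∀ N : ℕ, ∃ n : ℕ, N ≤ n ∧ fpq p q n < fpq p q (n + 1) := by
  intro N
  by_contra hcon
  push_neg at hcon
  set f := fpq p q with hf
  have h : ∀ n, N ≤ n → f (n+1) ≤ f n := fun n hn => hcon n hn
  have hq : 1 < q := lt_trans hp hpq'
  -- f is bounded by E
  have hmono : ∀ m, N ≤ m → f m ≤ f N := by
    intro m hm
    induction m, hm using Nat.le_induction with
    | base => exact le_refl _
    | succ n hn ih => exact le_trans (h n hn) ih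
  set E : ℕ := (Finset.range (N+1)).sup f with hEdef
  have hE : ∀ n, f n ≤ E := by
    intro n
    rcases le_or_gt n N with hn | hn
    · exact Finset.le_sup (Finset.mem_range.2 (by omega))
    · exact le_trans (hmono n hn.le) (Finset.le_sup (Finset.mem_range.2 (by omega)))
  set k : ℕ := 2*p*q + E + 1 with hkdef
  set M : ℕ := (p*q)^(2*k) with hMdef
  have hk1 : 1 ≤ k := by omega
  -- the finset A of products p^a q^b with a,b < k
  set A : Finset ℕ := (Finset.range k ×ˢ Finset.range k).image
      (fun ab : ℕ × ℕ => p ^ ab.1 * q ^ ab.2) with hAdef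
  have hAcard : A.card = k * k := by
    rw [hAdef, Finset.card_image_of_injective _ (pq_inj hp hq hpq),
      Finset.card_product, Finset.card_range]
  have hAform : ∀ x ∈ A, ∃ a b : ℕ, x = p ^ a * q ^ b := by
    intro x hx
    rw [hAdef, Finset.mem_image] at hx
    obtain ⟨⟨a, b⟩, -, rfl⟩ := hx
    exact ⟨a, b, rfl⟩
  have hAelem : ∀ x ∈ A, x ≤ (p*q)^k := by
    intro x hx
    rw [hAdef, Finset.mem_image] at hx
    obtain ⟨⟨a, b⟩, hab, rfl⟩ := hx
    rw [Finset.mem_product, Finset.mem_range, Finset.mem_range] at hab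
    calc p ^ a * q ^ b ≤ p ^ k * q ^ k := by
          exact Nat.mul_le_mul (Nat.pow_le_pow_right hp.le hab.1.le)
            (Nat.pow_le_pow_right hq.le hab.2.le)
      _ = (p*q)^k := (mul_pow p q k).symm
  have hkk : k * k ≤ (p*q)^k := by
    have h2 : k < 2^k := (Nat.lt_two_pow_self (n := k))
    have h4 : (4:ℕ) ≤ p*q := by nlinarith
    calc k * k ≤ 2^k * 2^k := Nat.mul_le_mul h2.le h2.le
      _ = 4^k := by rw [← mul_pow]; norm_num
      _ ≤ (p*q)^k := Nat.pow_le_pow_left h4 k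
  have hsumA : ∀ S ∈ A.powerset, S.sum id ≤ M := by
    intro S hS
    rw [Finset.mem_powerset] at hS
    calc S.sum id ≤ A.sum id := Finset.sum_le_sum_of_subset hS
      _ ≤ A.card * (p*q)^k := by
          simpa using Finset.sum_le_card_nsmul A id ((p*q)^k) (fun x hx => hAelem x hx)
      _ = k * k * (p*q)^k := by rw [hAcard]
      _ ≤ (p*q)^k * (p*q)^k := Nat.mul_le_mul_right _ hkk
      _ = M := by rw [hMdef, ← pow_add]; ring_nf
  -- counting: 2^(k*k) ≤ sum of f over range (M+1)
  have hcount : 2^(k*k) ≤ ∑ n ∈ Finset.range (M+1), f n := by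
    have hsub : A.powerset ⊆ (Finset.range (M+1)).biUnion
        (fun n => A.powerset.filter (fun S => S.sum id = n)) := by
      intro S hS
      rw [Finset.mem_biUnion]
      exact ⟨S.sum id, Finset.mem_range.2 (by have := hsumA S hS; omega),
        Finset.mem_filter.2 ⟨hS, rfl⟩⟩
    calc 2^(k*k) = A.powerset.card := by rw [Finset.card_powerset, hAcard]
      _ ≤ ((Finset.range (M+1)).biUnion
          (fun n => A.powerset.filter (fun S => S.sum id = n))).card :=
            Finset.card_le_card hsub
      _ ≤ ∑ n ∈ Finset.range (M+1),
            (A.powerset.filter (fun S => S.sum id = n)).card :=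
            Finset.card_biUnion_le
      _ ≤ ∑ n ∈ Finset.range (M+1), f n :=
            Finset.sum_le_sum (fun n _ => filter_card_le p q n A hAform)
  have hupper : ∑ n ∈ Finset.range (M+1), f n ≤ (M+1) * E := by
    simpa using Finset.sum_le_card_nsmul (Finset.range (M+1)) f E (fun n _ => hE n)
  -- final contradiction: (M+1)*E < 2^(k*k)
  have hM1 : 1 ≤ M := by
    rw [hMdef]; exact Nat.one_le_pow _ _ (by positivity)
  have hMbound : M ≤ 2^(2*k*(p*q)) := by
    have hpq2 : p*q ≤ 2^(p*q) := (Nat.lt_two_pow_self (n := p*q)).le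
    calc M = (p*q)^(2*k) := hMdef
      _ ≤ (2^(p*q))^(2*k) := Nat.pow_le_pow_left hpq2 _
      _ = 2^(2*k*(p*q)) := by rw [← pow_mul]; ring_nf
  have hfinal : (M+1) * E < 2^(k*k) := by
    have hexp : 2*k*(p*q) + (E+1) ≤ k*k := by
      have : k * k = 2*p*q*k + (E+1)*k := by rw [hkdef]; ring
      nlinarith
    calc (M+1) * E ≤ 2*M*E := by nlinarith
      _ < 2^(E+1) * M := by
          have hE2 : 2*E < 2^(E+1) := by
            have := (Nat.lt_two_pow_self (n := E))
            calc 2*E < 2*2^E := by omega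
              _ = 2^(E+1) := by rw [pow_succ]; ring
          calc 2*M*E = (2*E)*M := by ring
            _ < 2^(E+1) * M := by
                have h0 : 0 < M := by omega
                exact (Nat.mul_lt_mul_right h0).2 hE2
      _ ≤ 2^(E+1) * 2^(2*k*(p*q)) := Nat.mul_le_mul_left _ hMbound
      _ = 2^(2*k*(p*q) + (E+1)) := by rw [← pow_add]; ring_nf
      _ ≤ 2^(k*k) := Nat.pow_le_pow_right (by omega) hexp
  omega
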